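/- Let U be a real Hilbert space, G : U → (−∞,∞] proper, convex and lower semicontinuous, and F : U → ℝ Fréchet differentiable. Fix r > 0 and define C(v) := (1/(2r²))‖v − prox_{rG}(v − r∇F(v))‖². For v ∈ dom(G) and Δ > 0 let v̂ := T(v,Δ) := prox_{ΔG}(v − Δ∇F(v)) and define the predicted reduction pred(v,Δ) := ⟨∇F(v), v − v̂⟩ + G(v) − G(v̂) − (1/(2Δ))‖v̂ − v‖². Then for every v ∈ dom(G) and every Δ ∈ (0, r] one has pred(v,Δ) ≥ C(v)·Δ. -/

import Mathlib

open scoped RealInnerProductSpace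

private lemma norm_smul_add_smul_sq {U : Type*} [NormedAddCommGroup U] [InnerProductSpace ℝ U]
    (x y : U) (a b : ℝ) :
    ‖a • x + b • y‖^2 = a^2*‖x‖^2 + 2*a*b*⟪x,y⟫ + b^2*‖y‖^2 := by
  rw [@norm_add_sq_real, real_inner_smul_left, real_inner_smul_right, norm_smul, norm_smul,
    mul_pow, mul_pow, Real.norm_eq_abs, Real.norm_eq_abs, sq_abs, sq_abs]; ring


/-- Sufficient decrease for the proximal gradient model
(Lemma 3.8 / `lem:OC_conv_predictability`): `pred(v,Δ) ≥ C(v)·Δ` for `Δ ∈ (0, r]`. -/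
theorem prox_grad_sufficient_decrease
    {U : Type*} [NormedAddCommGroup U] [InnerProductSpace ℝ U] [CompleteSpace U]
    (G : U → EReal)
    -- `G` is proper
    (hGbot : ∀ v : U, G v ≠ ⊥) (hGtop : ∃ v : U, G v ≠ ⊤)
    -- `G` is convex
    (hGconv : ∀ v w : U, ∀ t : ℝ, 0 ≤ t → t ≤ 1 →
      G (t • v + (1 - t) • w) ≤ (t : EReal) * G v + ((1 - t : ℝ) : EReal) * G w)
    -- `G` is lower semicontinuous
    (hGlsc : LowerSemicontinuous G)
    -- `prox r v` is the (unique) minimizer of `w ↦ G w + ‖w - v‖² / (2 r)`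
    (prox : ℝ → U → U)
    (hprox : ∀ r : ℝ, 0 < r → ∀ v w : U,
      G (prox r v) + ((‖prox r v - v‖ ^ 2 / (2 * r) : ℝ) : EReal) ≤
        G w + ((‖w - v‖ ^ 2 / (2 * r) : ℝ) : EReal))
    -- `F` is Fréchet differentiable with gradient `gradF`
    (F : U → ℝ) (gradF : U → U) (hF : ∀ v : U, HasGradientAt F (gradF v) v)
    (r : ℝ) (hr : 0 < r) :
    ∀ v : U, G v ≠ ⊤ → ∀ Δ : ℝ, 0 < Δ → Δ ≤ r →
      1 / (2 * r ^ 2) * ‖v - prox r (v - r • gradF v)‖ ^ 2 * Δ ≤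
        ⟪gradF v, v - prox Δ (v - Δ • gradF v)⟫ +
          (G v).toReal - (G (prox Δ (v - Δ • gradF v))).toReal -
          1 / (2 * Δ) * ‖prox Δ (v - Δ • gradF v) - v‖ ^ 2 := by
  intro v hv Δ hΔ hΔr
  set g := gradF v with hg
  set ur : U := v - r • g with hur
  set uΔ : U := v - Δ • g with huΔ
  set Tr := prox r ur with hTrdef
  set TΔ := prox Δ uΔ with hTΔdef
  set b := (G v).toReal with hbdef
  have hGv : G v = (b : EReal) := (EReal.coe_toReal hv (hGbot v)).symm
  have h2r : (0:ℝ) < 2*r := by linarith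
  have h2Δ : (0:ℝ) < 2*Δ := by linarith
  -- finiteness of G at prox points
  have hfin : ∀ ρ : ℝ, 0 < ρ → ∀ u : U, G (prox ρ u) ≠ ⊤ := by
    intro ρ hρ u hcon
    have h := hprox ρ hρ u v
    rw [hcon, EReal.top_add_of_ne_bot (EReal.coe_ne_bot _), hGv, ← EReal.coe_add,
      top_le_iff] at h
    exact EReal.coe_ne_top _ h
  set a := (G Tr).toReal with hadef
  set c := (G TΔ).toReal with hcdef
  have hGTr : G Tr = (a : EReal) := (EReal.coe_toReal (hfin r hr ur) (hGbot Tr)).symm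
  have hGTΔ : G TΔ = (c : EReal) := (EReal.coe_toReal (hfin Δ hΔ uΔ) (hGbot TΔ)).symm
  set N := ‖Tr - v‖^2 with hNdef
  set M := ‖TΔ - v‖^2 with hMdef
  have hN0 : 0 ≤ N := sq_nonneg _
  set ir := (⟪g, Tr - v⟫ : ℝ) with hirdef
  set iΔ := (⟪g, TΔ - v⟫ : ℝ) with hiΔdef
  clear_value b a c N M ir iΔ
  -- Step (II): variational inequality for the r-prox, tested at v
  have hII : 2*r*(a - b) ≤ -2*N - 2*r*ir := by
    have key : ∀ s : ℝ, 0 < s → s ≤ 1 → 2*r*(a - b) ≤ -2*N - 2*r*ir + s * N := by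
      intro s hs hs1
      have hconv := hGconv v Tr s (le_of_lt hs) hs1
      have hp := (hprox r hr ur (s • v + (1-s) • Tr)).trans
        (add_le_add hconv le_rfl)
      rw [hGTr, hGv, ← EReal.coe_mul, ← EReal.coe_mul, ← EReal.coe_add, ← EReal.coe_add,
        ← EReal.coe_add, EReal.coe_le_coe_iff] at hp
      have hvec : s • v + (1-s) • Tr - ur = (1:ℝ) • (Tr - ur) + s • (v - Tr) := by
        rw [hur]; module
      have hinner : (⟪Tr - ur, v - Tr⟫ : ℝ) = -N - r * ir := by
        have h1 : Tr - ur = (1:ℝ) • (Tr - v) + r • g := by rw [hur]; module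
        have h2 : v - Tr = -(Tr - v) := by abel
        rw [h1, h2, inner_add_left, inner_neg_right, inner_neg_right,
          real_inner_smul_left, real_inner_smul_left, real_inner_self_eq_norm_sq, hirdef,
          hNdef]
        ring
      have hexp : ‖s • v + (1-s) • Tr - ur‖^2
          = ‖Tr - ur‖^2 + 2*s*(-N - r*ir) + s^2*N := by
        rw [hvec, norm_smul_add_smul_sq, hinner, norm_sub_rev v Tr, ← hNdef]; ring
      rw [hexp] at hp
      have hp' := mul_le_mul_of_nonneg_right hp (le_of_lt h2r)
      rw [add_mul, add_mul, add_mul, div_mul_cancel₀ _ (ne_of_gt h2r),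
        div_mul_cancel₀ _ (ne_of_gt h2r)] at hp'
      have hE : s * 0 ≤ s * ((-2*N - 2*r*ir + s*N) - 2*r*(a-b)) := by
        rw [mul_zero]; linarith [hp']
      have := le_of_mul_le_mul_left hE hs
      linarith
    refine le_of_forall_pos_le_add ?_
    intro ε hε
    set s := min 1 (ε / (N + 1)) with hsdef
    have hs0 : 0 < s := lt_min one_pos (by positivity)
    have hs1 : s ≤ 1 := min_le_left _ _
    have hsc : s * N ≤ ε := by
      have h1 : s ≤ ε / (N + 1) := min_le_right _ _
      have h2 : s * N ≤ (ε / (N + 1)) * N := mul_le_mul_of_nonneg_right h1 hN0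
      have h3 : (ε / (N + 1)) * N ≤ ε := by
        rw [div_mul_eq_mul_div, div_le_iff₀ (by positivity)]
        nlinarith
      linarith
    linarith [key s hs0 hs1]
  -- Step (I): prox inequality for Δ, tested at the convex combination
  set t := Δ / r with htdef
  have ht0 : 0 < t := div_pos hΔ hr
  have ht1 : t ≤ 1 := (div_le_one hr).mpr hΔr
  have htr : t * r = Δ := by rw [htdef]; field_simp
  have hI : 2*Δ*c + M + 2*Δ*iΔ ≤ (t*a + (1-t)*b)*(2*Δ) + t^2*N + 2*t*Δ*ir := by
    have hconv := hGconv Tr v t (le_of_lt ht0) ht1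
    have hp := (hprox Δ hΔ uΔ (t • Tr + (1-t) • v)).trans (add_le_add hconv le_rfl)
    rw [hGTr, hGv, hGTΔ, ← EReal.coe_mul, ← EReal.coe_mul, ← EReal.coe_add, ← EReal.coe_add,
      ← EReal.coe_add, EReal.coe_le_coe_iff] at hp
    have hvec1 : TΔ - uΔ = (1:ℝ) • (TΔ - v) + Δ • g := by rw [huΔ]; module
    have hvec2 : t • Tr + (1-t) • v - uΔ = t • (Tr - v) + Δ • g := by rw [huΔ]; module
    have he1 : ‖TΔ - uΔ‖^2 = M + 2*Δ*iΔ + Δ^2*‖g‖^2 := by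
      rw [hvec1, norm_smul_add_smul_sq, real_inner_comm g (TΔ - v), hiΔdef, hMdef]; ring
    have he2 : ‖t • Tr + (1-t) • v - uΔ‖^2 = t^2*N + 2*t*Δ*ir + Δ^2*‖g‖^2 := by
      rw [hvec2, norm_smul_add_smul_sq, real_inner_comm g (Tr - v), hirdef, hNdef]
    rw [he1, he2] at hp
    have hp' := mul_le_mul_of_nonneg_right hp (le_of_lt h2Δ)
    rw [add_mul, add_mul, div_mul_cancel₀ _ (ne_of_gt h2Δ),
      div_mul_cancel₀ _ (ne_of_gt h2Δ)] at hp'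
    linarith [hp']
  -- combine
  have hII2 : 2*Δ*(a-b) ≤ -2*t*N - 2*Δ*ir := by
    have h := mul_le_mul_of_nonneg_left hII (le_of_lt ht0)
    calc 2*Δ*(a-b) = t*(2*r*(a-b)) := by rw [← htr]; ring
      _ ≤ t*(-2*N - 2*r*ir) := h
      _ = -2*t*N - 2*Δ*ir := by rw [← htr]; ring
  have hII3 : 2*Δ*t*(a-b) ≤ -2*t^2*N - 2*t*Δ*ir := by
    have h := mul_le_mul_of_nonneg_left hII2 (le_of_lt ht0)
    calc 2*Δ*t*(a-b) = t*(2*Δ*(a-b)) := by ring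
      _ ≤ t*(-2*t*N - 2*Δ*ir) := h
      _ = -2*t^2*N - 2*t*Δ*ir := by ring
  have hcomb : 2*Δ*c + M + 2*Δ*iΔ + t^2*N ≤ 2*Δ*b := by linarith [hI, hII3]
  have ht2 : t^2*N = Δ^2*N/r^2 := by rw [htdef]; field_simp
  rw [ht2] at hcomb
  -- rewrite the goal
  have hgoal1 : (⟪g, v - TΔ⟫ : ℝ) = -iΔ := by
    rw [show v - TΔ = -(TΔ - v) by abel, inner_neg_right, hiΔdef]
  have hnormrev : ‖v - Tr‖^2 = N := by rw [hNdef, norm_sub_rev]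
  rw [hgoal1, hnormrev]
  have e1 : 1 / (2 * r ^ 2) * N * Δ = (Δ^2*N/r^2)/(2*Δ) := by
    field_simp
  have e2 : -iΔ + b - c - 1 / (2 * Δ) * M = (2*Δ*b - 2*Δ*c - 2*Δ*iΔ - M)/(2*Δ) := by
    field_simp; ring
  rw [e1, e2]
  rw [div_le_div_iff₀ h2Δ h2Δ]
  have hkey : Δ^2*N/r^2 ≤ 2*Δ*b - 2*Δ*c - 2*Δ*iΔ - M := by linarith [hcomb]
  have := mul_le_mul_of_nonneg_right hkey (le_of_lt h2Δ)
  linarith [this]
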